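/- For any simple graph G and any vertex v of G, the tree cover number satisfies T(G) - 1 ≤ T(G - v) ≤ T(G) + deg(v) - 1. -/

import Mathlib

open SimpleGraph

/-- A tree cover of `G`: vertex-disjoint induced subtrees covering all vertices. -/
def IsTreeCover {V : Type} (G : SimpleGraph V) (C : Finset (Set V)) : Prop :=
  (∀ s ∈ C, (G.induce s).IsTree) ∧ (∀ v : V, ∃ s ∈ C, v ∈ s) ∧
    (C : Set (Set V)).PairwiseDisjoint id

/-- The tree cover number: minimum cardinality of a tree cover. -/
noncomputable def treeCoverNumber {V : Type} (G : SimpleGraph V) : ℕ :=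
  sInf {n | ∃ C : Finset (Set V), IsTreeCover G C ∧ C.card = n}

variable {V W : Type}

/-- Acyclicity transfers along embeddings. -/
lemma acyclic_of_embedding {G : SimpleGraph V} {H : SimpleGraph W} (f : G ↪g H)
    (hH : H.IsAcyclic) : G.IsAcyclic := by
  intro v c hc
  exact hH (c.map f.toHom) ((Walk.map_isCycle_iff_of_injective f.injective).2 hc)

lemma iso_isTree {G : SimpleGraph V} {H : SimpleGraph W} (e : G ≃g H)
    (hG : G.IsTree) : H.IsTree := by
  refine ⟨e.connected_iff.1 hG.isConnected, ?_⟩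
  exact acyclic_of_embedding e.symm.toEmbedding hG.2

/-- `((G.induce s).induce t)` is isomorphic to `G.induce (val '' t)`. -/
noncomputable def induceInduceIso (G : SimpleGraph V) (s : Set V) (t : Set s) :
    (G.induce s).induce t ≃g G.induce (Subtype.val '' t) where
  toEquiv := (Equiv.Set.image Subtype.val t Subtype.val_injective).trans (Equiv.setCongr rfl)
  map_rel_iff' := by
    rintro ⟨⟨a, ha⟩, hat⟩ ⟨⟨b, hb⟩, hbt⟩
    simp [Equiv.Set.image, Equiv.Set.imageOfInjOn]

lemma walk_reachable_induce {H : SimpleGraph W} {S : Set W} {a b : W} (p : H.Walk a b)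
    (hp : ∀ z ∈ p.support, z ∈ S) :
    ∀ (ha : a ∈ S) (hb : b ∈ S), (H.induce S).Reachable ⟨a, ha⟩ ⟨b, hb⟩ := by
  induction p with
  | nil => intro _ _; rfl
  | @cons u x y h q ih =>
    intro ha hb
    have hw : x ∈ S := hp x (by simp)
    have hadj : (H.induce S).Adj ⟨u, ha⟩ ⟨x, hw⟩ := by simpa using h
    exact hadj.reachable.trans (ih (fun z hz => hp z (by simp [hz])) hw hb)

lemma reachable_of_mem_support [DecidableEq W] {H : SimpleGraph W} {a b z : W} (p : H.Walk a b)
    (hz : z ∈ p.support) : H.Reachable a z :=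
  ⟨p.takeUntil z hz⟩

lemma connected_induce_supp {H : SimpleGraph W} (c : H.ConnectedComponent) :
    (H.induce c.supp).Connected := by
  obtain ⟨a, ha⟩ := c.exists_rep
  classical
  have haS : a ∈ c.supp := by
    rw [ConnectedComponent.mem_supp_iff]; exact ha
  have : Nonempty ↑c.supp := ⟨⟨a, haS⟩⟩
  constructor
  rintro ⟨x, hx⟩ ⟨y, hy⟩
  have hxy : H.Reachable x y := by
    rw [ConnectedComponent.mem_supp_iff] at hx hy
    exact (ConnectedComponent.exact (hx.trans hy.symm))
  obtain ⟨p⟩ := hxy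
  refine walk_reachable_induce p (fun z hz => ?_) hx hy
  rw [ConnectedComponent.mem_supp_iff] at hx ⊢
  rw [← hx]
  exact ConnectedComponent.eq.2 (reachable_of_mem_support p hz).symm

lemma singleton_isTree (G : SimpleGraph V) (x : V) : (G.induce ({x} : Set V)).IsTree := by
  have : Nonempty ↑({x} : Set V) := ⟨⟨x, rfl⟩⟩
  constructor
  · constructor
    rintro ⟨a, ha⟩ ⟨b, hb⟩
    simp only [Set.mem_singleton_iff] at ha hb
    subst ha; subst hb
    rfl
  · intro z c hc
    cases c with
    | nil => exact hc.ne_nil rfl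
    | @cons _ y _ h q =>
      have hz : z = y := Subtype.ext (by
        have h1 : (z : V) ∈ ({x} : Set V) := z.2
        have h2 : (y : V) ∈ ({x} : Set V) := y.2
        simp only [Set.mem_singleton_iff] at h1 h2
        rw [h1, h2])
      exact h.ne hz

lemma exists_treeCover (G : SimpleGraph V) [Fintype V] :
    {n | ∃ C : Finset (Set V), IsTreeCover G C ∧ C.card = n}.Nonempty := by
  classical
  refine ⟨_, Finset.univ.image (fun x => ({x} : Set V)), ⟨?_, ?_, ?_⟩, rfl⟩
  · intro s hs
    simp only [Finset.mem_image] at hs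
    obtain ⟨x, _, rfl⟩ := hs
    exact singleton_isTree G x
  · intro x; exact ⟨{x}, by simp, rfl⟩
  · intro s hs t ht hst
    simp only [Finset.coe_image, Set.mem_image] at hs ht
    obtain ⟨x, _, rfl⟩ := hs; obtain ⟨y, _, rfl⟩ := ht
    simp only [Function.onFun, id]
    rw [Set.disjoint_singleton_left]
    simp only [Set.mem_singleton_iff]
    intro h; exact hst (by rw [h])

lemma tcn_le {G : SimpleGraph V} [Fintype V] {C : Finset (Set V)} (h : IsTreeCover G C) :
    treeCoverNumber G ≤ C.card := Nat.sInf_le ⟨C, h, rfl⟩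

lemma tcn_spec (G : SimpleGraph V) [Fintype V] :
    ∃ C : Finset (Set V), IsTreeCover G C ∧ C.card = treeCoverNumber G :=
  Nat.sInf_mem (exists_treeCover G)

lemma part1 {V : Type} [Fintype V] (G : SimpleGraph V) (v : V) :
    treeCoverNumber G ≤ treeCoverNumber (G.induce ({v}ᶜ : Set V)) + 1 := by
  classical
  obtain ⟨C', hC', hcard⟩ := tcn_spec (G.induce ({v}ᶜ : Set V))
  set C : Finset (Set V) :=
    insert ({v} : Set V) (C'.image (fun t => Subtype.val '' t)) with hCdef
  have himg : ∀ t : Set ↥({v}ᶜ : Set V), (Subtype.val '' t : Set V) ⊆ {v}ᶜ := by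
    rintro t x ⟨y, _, rfl⟩; exact y.2
  have hcov : IsTreeCover G C := by
    refine ⟨?_, ?_, ?_⟩
    · intro u hu
      rw [hCdef, Finset.mem_insert] at hu
      rcases hu with rfl | hu
      · exact singleton_isTree G v
      · obtain ⟨t, ht, rfl⟩ := Finset.mem_image.1 hu
        exact iso_isTree (induceInduceIso G _ t) (hC'.1 t ht)
    · intro x
      by_cases hx : x = v
      · exact ⟨{v}, by simp [hCdef], by simp [hx]⟩
      · obtain ⟨t, ht, hxt⟩ := hC'.2.1 ⟨x, hx⟩
        exact ⟨Subtype.val '' t, by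
          rw [hCdef]; exact Finset.mem_insert_of_mem (Finset.mem_image_of_mem _ ht),
          ⟨⟨x, hx⟩, hxt, rfl⟩⟩
    · intro a ha b hb hab
      rw [hCdef, Finset.coe_insert, Set.mem_insert_iff, Finset.coe_image] at ha hb
      have hsing : ∀ t : Set ↥({v}ᶜ : Set V), Disjoint (id ({v} : Set V)) (id (Subtype.val '' t)) := by
        intro t
        simp only [id]
        rw [Set.disjoint_singleton_left]
        intro hvm
        exact (himg t hvm) rfl
      rcases ha with rfl | ⟨t₁, ht₁, rfl⟩ <;> rcases hb with rfl | ⟨t₂, ht₂, rfl⟩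
      · exact absurd rfl hab
      · exact hsing t₂
      · exact (hsing t₁).symm
      · have ht12 : t₁ ≠ t₂ := by rintro rfl; exact hab rfl
        have := hC'.2.2 ht₁ ht₂ ht12
        simp only [id] at this ⊢
        exact (Set.disjoint_image_iff Subtype.val_injective).2 this
  calc treeCoverNumber G ≤ C.card := tcn_le hcov
    _ ≤ (C'.image (fun t => Subtype.val '' t)).card + 1 := Finset.card_insert_le _ _
    _ ≤ C'.card + 1 := Nat.add_le_add_right Finset.card_image_le 1
    _ = _ := by rw [hcard]

lemma coverOfPreimages {V : Type} [Fintype V] (G : SimpleGraph V) (v : V) (D : Finset (Set V))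
    (hsub : ∀ u ∈ D, u ⊆ ({v}ᶜ : Set V))
    (htree : ∀ u ∈ D, (G.induce u).IsTree)
    (hcov : ∀ x : V, x ≠ v → ∃ u ∈ D, x ∈ u)
    (hdisj : (D : Set (Set V)).PairwiseDisjoint id) :
    treeCoverNumber (G.induce ({v}ᶜ : Set V)) ≤ D.card := by
  classical
  set C' : Finset (Set ↥({v}ᶜ : Set V)) := D.image (fun u => Subtype.val ⁻¹' u) with hC'def
  have key : IsTreeCover (G.induce ({v}ᶜ : Set V)) C' := by
    refine ⟨?_, ?_, ?_⟩
    · intro t ht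
      obtain ⟨u, hu, rfl⟩ := Finset.mem_image.1 ht
      have heq : Subtype.val '' (Subtype.val ⁻¹' u : Set ↥({v}ᶜ : Set V)) = u := by
        rw [Set.image_preimage_eq_iff.2]
        rw [Subtype.range_val]
        exact hsub u hu
      have h1 := htree u hu
      rw [← heq] at h1
      exact iso_isTree (induceInduceIso G _ _).symm h1
    · rintro ⟨x, hx⟩
      obtain ⟨u, hu, hxu⟩ := hcov x (by simpa using hx)
      exact ⟨Subtype.val ⁻¹' u, Finset.mem_image_of_mem _ hu, hxu⟩
    · intro a ha b hb hab
      rw [hC'def, Finset.coe_image, Set.mem_image] at ha hb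
      obtain ⟨u₁, hu₁, rfl⟩ := ha
      obtain ⟨u₂, hu₂, rfl⟩ := hb
      have h12 : u₁ ≠ u₂ := by rintro rfl; exact hab rfl
      have := hdisj hu₁ hu₂ h12
      simp only [Function.onFun, id] at this ⊢
      exact Disjoint.preimage _ this
  exact le_trans (tcn_le key) Finset.card_image_le

lemma supp_disjoint {W : Type} {H : SimpleGraph W} {c₁ c₂ : H.ConnectedComponent}
    (h : c₁ ≠ c₂) : Disjoint c₁.supp c₂.supp := by
  rw [Set.disjoint_left]
  intro x h1 h2
  rw [ConnectedComponent.mem_supp_iff] at h1 h2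
  exact h (h1 ▸ h2 ▸ rfl)

/-- Each component of `G.induce (s \ {v})` contains a `G`-neighbor of `v`,
when `G.induce s` is a tree with `v ∈ s`. -/
lemma comp_card_le {V : Type} [Fintype V] (G : SimpleGraph V) [DecidableRel G.Adj]
    {v : V} {s : Set V} (hv : v ∈ s) (hs : (G.induce s).IsTree)
    [Fintype (G.induce (s \ {v})).ConnectedComponent] :
    Fintype.card ((G.induce (s \ {v})).ConnectedComponent) ≤ G.degree v := by
  classical
  set K := G.induce (s \ {v}) with hK
  have hP : ∀ c : K.ConnectedComponent, ∃ w, w ∈ G.neighborSet v ∧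
      ∃ hws : w ∈ s \ {v}, (⟨w, hws⟩ : ↥(s \ {v})) ∈ c.supp := by
    intro c
    obtain ⟨a, ha⟩ := c.exists_rep
    have hav : (a : V) ≠ v := a.2.2
    set v' : ↥s := ⟨v, hv⟩ with hv'
    set a' : ↥s := ⟨a.1, a.2.1⟩ with ha'
    have hne : v' ≠ a' := fun h => hav (congrArg Subtype.val h).symm
    obtain ⟨p⟩ := hs.isConnected.preconnected v' a'
    set q := p.toPath with hq
    have hqpath : (q : (G.induce s).Walk v' a').IsPath := q.2
    obtain ⟨w', h, r, hq2⟩ := Walk.exists_eq_cons_of_ne hne (q : (G.induce s).Walk v' a')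
    have hqp2 := hqpath
    rw [hq2] at hqp2
    have hvr : v' ∉ r.support := ((Walk.cons_isPath_iff _ _).1 hqp2).2
    -- w := w'.val is a neighbor of v
    have hadj : G.Adj v (w' : V) := h
    have hwv : (w' : V) ≠ v := fun hh => h.ne' (Subtype.ext hh)
    have hws : (w' : V) ∈ s \ {v} := ⟨w'.2, hwv⟩
    refine ⟨w', hadj, hws, ?_⟩
    -- reachability from w' to a' avoiding v'
    have hsupp : ∀ z ∈ r.support, z ∈ {z : ↥s | z ≠ v'} := by
      intro z hz hzv
      exact hvr (hzv ▸ hz)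
    have hrw : ((G.induce s).induce {z : ↥s | z ≠ v'}).Reachable
        ⟨w', fun hh => hwv (congrArg Subtype.val hh)⟩ ⟨a', fun hh => hav (congrArg Subtype.val hh)⟩ :=
      walk_reachable_induce r hsupp _ _
    -- transfer to K
    have hreach : K.Reachable ⟨w', hws⟩ ⟨a.1, a.2⟩ :=
      hrw.map (⟨fun x => ⟨x.1.1, ⟨x.1.2, fun hh => x.2 (Subtype.ext hh)⟩⟩, fun hxy => hxy⟩ :
        ((G.induce s).induce {z : ↥s | z ≠ v'}) →g K)
    rw [ConnectedComponent.mem_supp_iff, ← ha]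
    exact ConnectedComponent.sound hreach
  choose f h1 h2 using hP
  have hinj : Function.Injective (fun c : K.ConnectedComponent => (⟨f c, h1 c⟩ : G.neighborSet v)) := by
    intro c₁ c₂ hc
    by_contra hne
    have hd := supp_disjoint hne
    rw [Set.disjoint_left] at hd
    obtain ⟨hw1, hm1⟩ := h2 c₁
    obtain ⟨hw2, hm2⟩ := h2 c₂
    have hfeq : f c₁ = f c₂ := congrArg Subtype.val hc
    apply hd hm1
    have : (⟨f c₁, hw1⟩ : ↥(s \ {v})) = ⟨f c₂, hw2⟩ := Subtype.ext hfeq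
    rw [this]
    exact hm2
  have hfin := Fintype.card_le_of_injective _ hinj
  rw [G.card_neighborSet_eq_degree] at hfin
  convert hfin using 2

lemma part2 {V : Type} [Fintype V] (G : SimpleGraph V) [DecidableRel G.Adj] (v : V) :
    treeCoverNumber (G.induce ({v}ᶜ : Set V)) + 1 ≤ treeCoverNumber G + G.degree v := by
  classical
  obtain ⟨C, hC, hcard⟩ := tcn_spec G
  obtain ⟨s, hsC, hvs⟩ := hC.2.1 v
  haveI : Fintype (G.induce (s \ {v})).ConnectedComponent := Fintype.ofFinite _
  set K := G.induce (s \ {v}) with hK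
  set F : Finset (Set V) :=
    Finset.univ.image (fun c : K.ConnectedComponent => Subtype.val '' c.supp) with hF
  set D : Finset (Set V) := (C.erase s) ∪ F with hD
  have hFsub : ∀ u ∈ F, u ⊆ s \ {v} := by
    intro u hu
    obtain ⟨c, _, rfl⟩ := Finset.mem_image.1 hu
    rintro x ⟨y, _, rfl⟩
    exact y.2
  have hdisjS : ∀ u ∈ C.erase s, Disjoint u s := by
    intro u hu
    have := hC.2.2 (Finset.mem_coe.2 (Finset.mem_of_mem_erase hu)) (Finset.mem_coe.2 hsC)
      (Finset.ne_of_mem_erase hu)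
    simpa [Function.onFun] using this
  have hsub : ∀ u ∈ D, u ⊆ ({v}ᶜ : Set V) := by
    intro u hu
    rw [hD, Finset.mem_union] at hu
    rcases hu with hu | hu
    · intro x hx hxv
      simp only [Set.mem_singleton_iff] at hxv
      subst hxv
      exact Set.disjoint_left.1 (hdisjS u hu) hx hvs
    · intro x hx
      exact (hFsub u hu hx).2
  have htree : ∀ u ∈ D, (G.induce u).IsTree := by
    intro u hu
    rw [hD, Finset.mem_union] at hu
    rcases hu with hu | hu
    · exact hC.1 u (Finset.mem_of_mem_erase hu)
    · obtain ⟨c, _, rfl⟩ := Finset.mem_image.1 hu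
      refine iso_isTree (induceInduceIso G (s \ {v}) c.supp) ⟨connected_induce_supp c, ?_⟩
      refine acyclic_of_embedding
        (⟨⟨fun x => ⟨x.1.1, x.1.2.1⟩,
          fun a b hab => by
            have hv2 := congrArg Subtype.val hab
            exact Subtype.ext (Subtype.ext hv2)⟩, Iff.rfl⟩ :
          K.induce c.supp ↪g G.induce s) (hC.1 s hsC).2
  have hcov : ∀ x : V, x ≠ v → ∃ u ∈ D, x ∈ u := by
    intro x hxv
    obtain ⟨u, huC, hxu⟩ := hC.2.1 x
    by_cases hus : u = s
    · rw [hus] at hxu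
      have hxs : x ∈ s \ {v} := ⟨hxu, hxv⟩
      refine ⟨Subtype.val '' (K.connectedComponentMk ⟨x, hxs⟩).supp,
        Finset.mem_union_right _ (Finset.mem_image_of_mem _ (Finset.mem_univ _)), ?_⟩
      exact ⟨⟨x, hxs⟩, ConnectedComponent.mem_supp_iff _ _ |>.2 rfl, rfl⟩
    · exact ⟨u, Finset.mem_union_left _ (Finset.mem_erase.2 ⟨hus, huC⟩), hxu⟩
  have hdisj : (D : Set (Set V)).PairwiseDisjoint id := by
    intro a ha b hb hab
    rw [hD, Finset.coe_union, Set.mem_union] at ha hb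
    rcases ha with ha | ha <;> rcases hb with hb | hb
    · exact hC.2.2 (Finset.mem_coe.2 (Finset.mem_of_mem_erase ha))
        (Finset.mem_coe.2 (Finset.mem_of_mem_erase hb))
        (by intro h; exact hab h)
    · exact (hdisjS a ha).mono_right ((hFsub b hb).trans Set.diff_subset)
    · exact ((hdisjS b hb).mono_right ((hFsub a ha).trans Set.diff_subset)).symm
    · obtain ⟨c₁, _, rfl⟩ := Finset.mem_image.1 (Finset.mem_coe.1 ha)
      obtain ⟨c₂, _, rfl⟩ := Finset.mem_image.1 (Finset.mem_coe.1 hb)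
      have hc : c₁ ≠ c₂ := by rintro rfl; exact hab rfl
      exact (Set.disjoint_image_iff Subtype.val_injective).2 (supp_disjoint hc)
  have hmain := coverOfPreimages G v D hsub htree hcov hdisj
  have hcardD : D.card ≤ (C.card - 1) + Fintype.card K.ConnectedComponent := by
    calc D.card ≤ (C.erase s).card + F.card := Finset.card_union_le _ _
      _ ≤ (C.card - 1) + Fintype.card K.ConnectedComponent := by
          rw [Finset.card_erase_of_mem hsC]
          exact Nat.add_le_add (le_refl _) (Finset.card_image_le.trans (by simp))
  have hcomp := comp_card_le G hvs (hC.1 s hsC)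
  have hpos : 1 ≤ C.card := Finset.card_pos.2 ⟨s, hsC⟩
  have hKK : Fintype.card K.ConnectedComponent
      = Fintype.card (G.induce (s \ {v})).ConnectedComponent := rfl
  omega

theorem stmt_0 {V : Type} [Fintype V] (G : SimpleGraph V) [DecidableRel G.Adj] (v : V) :
    treeCoverNumber G - 1 ≤ treeCoverNumber (G.induce ({v}ᶜ : Set V)) ∧
      treeCoverNumber (G.induce ({v}ᶜ : Set V)) ≤ treeCoverNumber G + G.degree v - 1 := by
  have h1 := part1 G v
  have h2 := part2 G v
  omega
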